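/- Let T be an n-vertex tournament with balanced bipartition V(T) = A₀ ∪ B₀, |A₀| = n/2, such that the set A₀⁻ = {v ∈ A₀ : |N⁻(v) ∩ A₀| ≤ (1/4 − δ)n} has size at most δn/4, where δ > 0 and δ⁰(T) ≥ ⌊(n+2)/4⌋. Then the set A₀⁺ = {v ∈ A₀ : |N⁺(v) ∩ A₀| ≤ n/5} has size at most 15δn. -/

import Mathlib

open Finset

def IsTournament {V : Type*} (T : V → V → Prop) : Prop :=
  (∀ v, ¬ T v v) ∧ ∀ u v : V, u ≠ v → (T u v ↔ ¬ T v u)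

def inDeg {V : Type*} [Fintype V] (T : V → V → Prop) [DecidableRel T] (v : V) : ℕ :=
  (Finset.univ.filter (fun u => T u v)).card

def outDeg {V : Type*} [Fintype V] (T : V → V → Prop) [DecidableRel T] (v : V) : ℕ :=
  (Finset.univ.filter (fun u => T v u)).card

instance {V : Type*} (T : V → V → Prop) [DecidableRel T] :
    DecidablePred (fun p : V × V => T p.1 p.2) :=
  fun p => inferInstanceAs (Decidable (T p.1 p.2))

def eCount {V : Type*} (T : V → V → Prop) [DecidableRel T] (A B : Finset V) : ℕ :=
  ((A ×ˢ B).filter (fun p => T p.1 p.2)).card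

def minSemidegree {V : Type*} [Fintype V] (T : V → V → Prop) [DecidableRel T] : ℕ :=
  if h : (Finset.univ : Finset V).Nonempty then
    Finset.univ.inf' h (fun v => min (inDeg T v) (outDeg T v))
  else 0

set_option maxHeartbeats 1000000 in
theorem stmt_6 : ∀ δ : ℝ, 0 < δ → ∃ n₀ : ℕ, ∀ n : ℕ, n₀ ≤ n → Even n →
    ∀ (V : Type) [Fintype V] [DecidableEq V] (T : V → V → Prop) [DecidableRel T],
      IsTournament T → Fintype.card V = n →
      ∀ A₀ B₀ : Finset V, Disjoint A₀ B₀ → A₀ ∪ B₀ = Finset.univ → A₀.card = n/2 →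
      (∀ v : V, (n + 2)/4 ≤ inDeg T v ∧ (n + 2)/4 ≤ outDeg T v) →
      (((A₀.filter (fun v => ((A₀.filter (fun u => T u v)).card : ℝ) ≤ (1/4 - δ) * n)).card : ℝ)
          ≤ δ * n / 4) →
      ((A₀.filter (fun v => ((A₀.filter (fun u => T v u)).card : ℝ) ≤ (n : ℝ)/5)).card : ℝ)
          ≤ 15 * δ * n := by
  intro δ hδ
  refine ⟨⌈(2:ℝ)/δ⌉₊, fun n hn hne V _ _ T _ hT hcard A₀ B₀ hdisj huniv hA hmin hP => ?_⟩
  obtain ⟨k, hk⟩ := hne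
  -- basic numeric facts
  have hn2 : (2:ℝ)/δ ≤ n := le_trans (Nat.le_ceil _) (Nat.cast_le.mpr hn)
  have hδn : 2 ≤ δ * n := by rw [div_le_iff₀ hδ] at hn2; linarith
  have hnpos : (0:ℝ) < n := by
    rcases Nat.eq_zero_or_pos n with h | h
    · subst h; simp at hδn; linarith
    · exact_mod_cast h
  have hmA : (A₀.card : ℝ) = (n:ℝ)/2 := by
    have : A₀.card = k := by omega
    rw [this]
    have : (n:ℝ) = 2 * k := by rw [hk]; push_cast; ring
    rw [this]; ring
  -- degree sum identity within A₀
  have h1 : ∀ v ∈ A₀, (A₀.filter (fun u => T v u)).card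
      + (A₀.filter (fun u => T u v)).card + 1 = A₀.card := by
    intro v hv
    have hdis : Disjoint (A₀.filter (fun u => T v u)) (A₀.filter (fun u => T u v)) := by
      rw [Finset.disjoint_filter]
      intro u hu h1 h2
      rcases eq_or_ne v u with rfl | hne
      · exact hT.1 v h1
      · exact ((hT.2 v u hne).mp h1) h2
    have hun : (A₀.filter (fun u => T v u)) ∪ (A₀.filter (fun u => T u v)) = A₀.erase v := by
      ext u
      simp only [Finset.mem_union, Finset.mem_filter, Finset.mem_erase]
      constructor
      · rintro (⟨hu, h⟩ | ⟨hu, h⟩)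
        · exact ⟨fun he => hT.1 v (he ▸ h), hu⟩
        · exact ⟨fun he => hT.1 v (he ▸ h), hu⟩
      · rintro ⟨hne, hu⟩
        by_cases h : T v u
        · exact Or.inl ⟨hu, h⟩
        · exact Or.inr ⟨hu, (hT.2 u v hne).mpr h⟩
    have hc := Finset.card_union_of_disjoint hdis
    rw [hun, Finset.card_erase_of_mem hv] at hc
    have hpos : 1 ≤ A₀.card := Finset.card_pos.mpr ⟨v, hv⟩
    omega
  have hswap : ∑ v ∈ A₀, (A₀.filter (fun u => T u v)).card
      = ∑ v ∈ A₀, (A₀.filter (fun u => T v u)).card := by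
    simp only [Finset.card_filter]
    exact Finset.sum_comm
  have htot : 2 * ∑ v ∈ A₀, (A₀.filter (fun u => T v u)).card + A₀.card
      = A₀.card * A₀.card := by
    have h2 : ∑ v ∈ A₀, ((A₀.filter (fun u => T v u)).card
        + (A₀.filter (fun u => T u v)).card + 1) = ∑ _v ∈ A₀, A₀.card :=
      Finset.sum_congr rfl h1
    rw [Finset.sum_const, smul_eq_mul] at h2
    rw [Finset.sum_add_distrib, Finset.sum_add_distrib, hswap, Finset.sum_const,
      smul_eq_mul, mul_one] at h2
    omega
  have hreal : ∑ v ∈ A₀, ((A₀.filter (fun u => T v u)).card : ℝ)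
      = ((A₀.card:ℝ) * A₀.card - A₀.card)/2 := by
    have := congrArg (Nat.cast (R := ℝ)) htot
    push_cast at this
    linarith
  -- set decomposition
  set P := A₀.filter (fun v => ((A₀.filter (fun u => T u v)).card : ℝ) ≤ (1/4 - δ) * n) with hPdef
  set S := A₀.filter (fun v => ((A₀.filter (fun u => T v u)).card : ℝ) ≤ (n:ℝ)/5) with hSdef
  set Q := A₀ \ P with hQdef
  set S' := Q.filter (fun v => ((A₀.filter (fun u => T v u)).card : ℝ) ≤ (n:ℝ)/5) with hS'def
  set R := Q \ S' with hRdef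
  have hPsub : P ⊆ A₀ := Finset.filter_subset _ _
  have hS'sub : S' ⊆ Q := Finset.filter_subset _ _
  have hsplit1 : ∑ v ∈ Q, ((A₀.filter (fun u => T v u)).card : ℝ)
      + ∑ v ∈ P, ((A₀.filter (fun u => T v u)).card : ℝ)
      = ∑ v ∈ A₀, ((A₀.filter (fun u => T v u)).card : ℝ) := Finset.sum_sdiff hPsub
  have hsplit2 : ∑ v ∈ R, ((A₀.filter (fun u => T v u)).card : ℝ)
      + ∑ v ∈ S', ((A₀.filter (fun u => T v u)).card : ℝ)
      = ∑ v ∈ Q, ((A₀.filter (fun u => T v u)).card : ℝ) := Finset.sum_sdiff hS'sub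
  have hcard1 : (Q.card : ℝ) + P.card = A₀.card := by
    have h := Finset.sum_sdiff (f := fun _ : V => (1:ℝ)) hPsub
    simpa using h
  have hcard2 : (R.card : ℝ) + S'.card = Q.card := by
    have h := Finset.sum_sdiff (f := fun _ : V => (1:ℝ)) hS'sub
    simpa using h
  -- term bounds
  have hb1 : ∑ v ∈ P, ((A₀.filter (fun u => T v u)).card : ℝ) ≤ P.card * ((n:ℝ)/2) := by
    calc ∑ v ∈ P, ((A₀.filter (fun u => T v u)).card : ℝ)
        ≤ ∑ _v ∈ P, ((n:ℝ)/2) := by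
          refine Finset.sum_le_sum fun v hv => ?_
          have := Finset.card_filter_le A₀ (fun u => T v u)
          have h2 : ((A₀.filter (fun u => T v u)).card : ℝ) ≤ A₀.card := by exact_mod_cast this
          linarith [hmA ▸ h2]
      _ = P.card * ((n:ℝ)/2) := by rw [Finset.sum_const, nsmul_eq_mul]
  have hb2 : ∑ v ∈ S', ((A₀.filter (fun u => T v u)).card : ℝ) ≤ S'.card * ((n:ℝ)/5) := by
    calc ∑ v ∈ S', ((A₀.filter (fun u => T v u)).card : ℝ)
        ≤ ∑ _v ∈ S', ((n:ℝ)/5) := by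
          refine Finset.sum_le_sum fun v hv => ?_
          exact (Finset.mem_filter.mp hv).2
      _ = S'.card * ((n:ℝ)/5) := by rw [Finset.sum_const, nsmul_eq_mul]
  have hb3 : ∑ v ∈ R, ((A₀.filter (fun u => T v u)).card : ℝ)
      ≤ R.card * ((1/4 + δ) * n) := by
    calc ∑ v ∈ R, ((A₀.filter (fun u => T v u)).card : ℝ)
        ≤ ∑ _v ∈ R, ((1/4 + δ) * (n:ℝ)) := by
          refine Finset.sum_le_sum fun v hv => ?_
          have hvQ : v ∈ Q := (Finset.mem_sdiff.mp hv).1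
          have hvA : v ∈ A₀ := (Finset.mem_sdiff.mp hvQ).1
          have hvP : v ∉ P := (Finset.mem_sdiff.mp hvQ).2
          have hind : ¬ ((A₀.filter (fun u => T u v)).card : ℝ) ≤ (1/4 - δ) * n := by
            intro h
            exact hvP (Finset.mem_filter.mpr ⟨hvA, h⟩)
          push_neg at hind
          have heq := h1 v hvA
          have heqr : ((A₀.filter (fun u => T v u)).card : ℝ)
              + ((A₀.filter (fun u => T u v)).card : ℝ) + 1 = (A₀.card : ℝ) := by
            exact_mod_cast congrArg (Nat.cast (R := ℝ)) heq
          linarith [hmA ▸ heqr]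
      _ = R.card * ((1/4 + δ) * n) := by rw [Finset.sum_const, nsmul_eq_mul]
  -- S ⊆ P ∪ S'
  have hSsub : S ⊆ P ∪ S' := by
    intro v hv
    have hvA : v ∈ A₀ := (Finset.mem_filter.mp hv).1
    have hvp : ((A₀.filter (fun u => T v u)).card : ℝ) ≤ (n:ℝ)/5 := (Finset.mem_filter.mp hv).2
    by_cases h : v ∈ P
    · exact Finset.mem_union_left _ h
    · exact Finset.mem_union_right _ (Finset.mem_filter.mpr ⟨Finset.mem_sdiff.mpr ⟨hvA, h⟩, hvp⟩)
  have hScard : (S.card : ℝ) ≤ (P.card : ℝ) + S'.card := by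
    have := (Finset.card_le_card hSsub).trans (Finset.card_union_le P S')
    exact_mod_cast this
  -- combine
  have hmain : ((A₀.card:ℝ) * A₀.card - A₀.card)/2
      ≤ P.card * ((n:ℝ)/2) + S'.card * ((n:ℝ)/5) + R.card * ((1/4 + δ) * n) := by
    rw [← hreal, ← hsplit1, ← hsplit2]
    linarith
  have hPc : (P.card : ℝ) ≤ δ * n / 4 := hP
  have hRc : (R.card : ℝ) = (n:ℝ)/2 - P.card - S'.card := by
    rw [← hmA]; linarith
  rw [hmA, hRc] at hmain
  have hP0 : (0:ℝ) ≤ P.card := Nat.cast_nonneg _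
  have hS'0 : (0:ℝ) ≤ S'.card := Nat.cast_nonneg _
  -- from hmain: S'.card * (1/20 + δ) * n ≤ δ*n^2/2 + P.card*n/4 + n/4
  have key : (S'.card : ℝ) * n ≤ (11/16) * δ * n * n * 20 := by
    nlinarith [mul_nonneg hS'0 (mul_nonneg hδ.le hnpos.le),
      mul_nonneg hP0 (mul_nonneg hδ.le hnpos.le), hδn, hnpos, hPc]
  have hS'le : (S'.card : ℝ) ≤ (55/4) * δ * n := by
    have := (mul_le_mul_iff_of_pos_right hnpos).mp (by linarith : (S'.card : ℝ) * n ≤ ((55/4) * δ * n) * n)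
    linarith
  calc (S.card : ℝ) ≤ (P.card : ℝ) + S'.card := hScard
    _ ≤ δ * n / 4 + (55/4) * δ * n := by linarith
    _ ≤ 15 * δ * n := by nlinarith
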